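/- Let $L$ be a Lie algebra over a field $k$ and let $\lambda \in (L/[L,L])^*$ with $\lambda \neq 0$. Viewing $\lambda$ as an element of $L^*$ vanishing on $[L,L]$, set $K = \ker\lambda \subseteq L$. Then there is a natural isomorphism $H^1(L; k_\lambda) \cong \mathrm{Hom}_{L/K}(K/[K,K], k_\lambda)$. -/

import Mathlib

/-- For a nonzero functional `λ` on `L` vanishing on `[L,L]`, with `K = ker λ`, there is
an isomorphism `H¹(L; k_λ) ≅ Hom_{L/K}(K/[K,K], k_λ)`.  Here `H¹(L; k_λ)` is the quotient
of the space `D` of derivations `d : L → k_λ` (i.e. `d⁅x,y⁆ = λ(x)d(y) - λ(y)d(x)`) by the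
space `ID = k·λ` of inner derivations, and `Hom_{L/K}(K/[K,K], k_λ)` is the space `H` of
functionals `f` on `K` satisfying `f(⁅ℓ,ω⁆) = λ(ℓ)·f(ω)` for all `ℓ ∈ L`, `ω ∈ K`. -/
theorem stmt9 (k : Type*) [Field k] (L : Type*) [LieRing L] [LieAlgebra k L]
    (lam : L →ₗ[k] k) (hbr : ∀ x y : L, lam ⁅x, y⁆ = 0) (hne : lam ≠ 0)
    (D ID : Submodule k (L →ₗ[k] k))
    (hD : ∀ d : L →ₗ[k] k, d ∈ D ↔ ∀ x y : L, d ⁅x, y⁆ = lam x * d y - lam y * d x)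
    (hID : ID = Submodule.span k {lam})
    (hle : ID ≤ D)
    (H : Submodule k (↥(LinearMap.ker lam) →ₗ[k] k))
    (hH : ∀ f : ↥(LinearMap.ker lam) →ₗ[k] k,
      f ∈ H ↔ ∀ (ℓ : L) (ω : LinearMap.ker lam),
        f ⟨⁅ℓ, (ω : L)⁆, (LinearMap.mem_ker).mpr (hbr ℓ (ω : L))⟩ = lam ℓ * f ω) :
    Nonempty ((@HasQuotient.Quotient ↥D (Submodule k ↥D)
      (@Submodule.hasQuotient k ↥D _ D.addCommGroup D.module)
      (Submodule.comap D.subtype ID)) ≃ₗ[k] ↥H) := by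
  classical
  -- choose `e` with `lam e = 1`
  obtain ⟨x0, hx0⟩ : ∃ x, lam x ≠ 0 := by
    by_contra h
    push_neg at h
    exact hne (by ext x; simpa using h x)
  set e : L := (lam x0)⁻¹ • x0 with he
  have hle1 : lam e = 1 := by simp [he, inv_mul_cancel₀ hx0]
  have hKmem : ∀ ω : LinearMap.ker lam, lam (ω : L) = 0 := fun ω => LinearMap.mem_ker.mp ω.2
  have hbmem : ∀ x y : L, ⁅x, y⁆ ∈ LinearMap.ker lam := fun x y => LinearMap.mem_ker.mpr (hbr x y)
  -- projection onto K
  set π : L →ₗ[k] LinearMap.ker lam := (LinearMap.id - lam.smulRight e).codRestrict (LinearMap.ker lam) (by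
    intro x
    simp [LinearMap.mem_ker, hle1]) with hπ
  have hπ_apply : ∀ x : L, ((π x : L)) = x - lam x • e := fun x => rfl
  have hdecomp : ∀ x : L, x = lam x • e + ((π x : L)) := by
    intro x
    rw [hπ_apply]
    module
  have hπK : ∀ ω : LinearMap.ker lam, π (ω : L) = ω := by
    intro ω
    ext
    simp [hπ_apply, hKmem ω]
  -- the bracket as a bilinear map into K
  set B : L →ₗ[k] L →ₗ[k] LinearMap.ker lam := LinearMap.mk₂ k (fun x y => ⟨⁅x, y⁆, hbmem x y⟩)
    (by intros; ext; simp [add_lie])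
    (by intros; ext; simp [smul_lie])
    (by intros; ext; simp [lie_add])
    (by intros; ext; simp [lie_smul]) with hBdef
  have hB_apply : ∀ x y : L, B x y = ⟨⁅x, y⁆, hbmem x y⟩ := fun x y => rfl
  -- restriction map
  set ρ : ↥D →ₗ[k] (LinearMap.ker lam →ₗ[k] k) := (LinearMap.lcomp k k (LinearMap.ker lam).subtype).comp D.subtype with hρ
  have hρ_apply : ∀ (d : ↥D) (ω : LinearMap.ker lam), ρ d ω = (d : L →ₗ[k] k) (ω : L) := fun _ _ => rfl
  have hρH : ∀ d : ↥D, ρ d ∈ H := by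
    intro d
    rw [hH]
    intro ℓ ω
    have hd := (hD d.1).mp d.2
    have hω : lam (ω : L) = 0 := hKmem ω
    simp only [hρ_apply]
    rw [hd ℓ ω, hω]
    ring
  set φ : ↥D →ₗ[k] ↥H := ρ.codRestrict H hρH with hφ
  have hφ_apply : ∀ (d : ↥D), (φ d : LinearMap.ker lam →ₗ[k] k) = ρ d := fun _ => rfl
  -- surjectivity
  have hsurj : Function.Surjective φ := by
    rintro ⟨f, hf⟩
    rw [hH] at hf
    have hfB : ∀ (ℓ : L) (ω : LinearMap.ker lam), f (B ℓ (ω : L)) = lam ℓ * f ω := by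
      intro ℓ ω
      rw [hB_apply]
      exact hf ℓ ω
    have key : ∀ x y : L, f (B x y) = lam x * f (π y) - lam y * f (π x) := by
      intro x y
      have hBee : B e e = 0 := by
        ext
        simp [hB_apply]
      have hBskew : ∀ u v : L, B u v = -B v u := by
        intro u v
        apply Subtype.ext
        simp only [hB_apply, NegMemClass.coe_neg]
        exact (lie_skew u v).symm
      calc f (B x y) = f (B (lam x • e + (π x : L)) (lam y • e + (π y : L))) := by
            rw [← hdecomp x, ← hdecomp y]
        _ = lam x * lam y * f (B e e) + lam x * f (B e (π y : L))
              + lam y * f (B (π x : L) e) + f (B (π x : L) (π y : L)) := by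
            simp only [map_add, map_smul, LinearMap.add_apply, LinearMap.smul_apply,
              smul_eq_mul]
            ring
        _ = lam x * f (π y) - lam y * f (π x) := by
            rw [hBee, hBskew (π x : L) e, hfB e (π y), hfB (π x : L) (π y)]
            simp only [map_neg, map_zero, hfB e (π x)]
            rw [hKmem (π x), hle1]
            ring
    set d : L →ₗ[k] k := f.comp π with hd
    have hd_apply : ∀ x : L, d x = f (π x) := fun _ => rfl
    have hdmem : d ∈ D := by
      rw [hD]
      intro x y
      have hπbr : π ⁅x, y⁆ = B x y := by
        ext
        simp [hπ_apply, hB_apply, hbr]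
      rw [hd_apply, hπbr, key, hd_apply, hd_apply]
    refine ⟨⟨d, hdmem⟩, ?_⟩
    apply Subtype.ext
    rw [hφ_apply]
    ext ω
    rw [hρ_apply]
    show d (ω : L) = f ω
    rw [hd_apply, hπK]
  -- kernel
  have hker : LinearMap.ker φ = Submodule.comap D.subtype ID := by
    ext d
    simp only [LinearMap.mem_ker, Submodule.mem_comap, Submodule.subtype_apply, hID,
      Submodule.mem_span_singleton]
    constructor
    · intro hd
      have h0 : ∀ ω : LinearMap.ker lam, (d : L →ₗ[k] k) (ω : L) = 0 := by
        intro ω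
        have := congrArg (fun g : ↥H => (g : LinearMap.ker lam →ₗ[k] k) ω) hd
        simpa [hφ_apply, hρ_apply] using this
      refine ⟨(d : L →ₗ[k] k) e, ?_⟩
      ext x
      have hx := congrArg (d : L →ₗ[k] k) (hdecomp x)
      rw [map_add, map_smul, h0 (π x)] at hx
      simp only [LinearMap.smul_apply, smul_eq_mul]
      rw [hx, smul_eq_mul, add_zero]
      ring
    · rintro ⟨c, hc⟩
      apply Subtype.ext
      rw [hφ_apply]
      ext ω
      rw [hρ_apply, ← hc]
      simp [hKmem ω]
  exact ⟨(Submodule.quotEquivOfEq _ _ hker.symm).trans (@LinearMap.quotKerEquivOfSurjective k ↥D ↥H _ _ _ _ _ φ hsurj)⟩
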